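/- arXiv:2408.11186 — 7 statements merged into one kernel-verified Lean document; each statement's English description precedes it below -/
import Mathlib

section
/- Let n ≥ 2 be a natural number, let γ be a real number with 0 ≤ γ ≤ 1, and let θ ∈ (0, π/2]. Define θ' = arcsin(√(1 − 1/n) · sin θ) and θ'' = arcsin(√(1 − 1/(2n)) · sin θ). If sin θ · √(1 − 1/(2n)) ≥ 4n · √(1 − γ²), then θ'' − θ' ≥ arccos γ. -/
open Real

set_option maxHeartbeats 1000000 in
/-- Lemma 1 of the paper. -/
theorem stmt_0 (n : ℕ) (hn : 2 ≤ n) (γ θ : ℝ)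
    (hγ0 : 0 ≤ γ) (hγ1 : γ ≤ 1) (hθ0 : 0 < θ) (hθ1 : θ ≤ π / 2)
    (θ' θ'' : ℝ)
    (hθ' : θ' = arcsin (Real.sqrt (1 - 1 / (n : ℝ)) * Real.sin θ))
    (hθ'' : θ'' = arcsin (Real.sqrt (1 - 1 / (2 * (n : ℝ))) * Real.sin θ))
    (hcond : Real.sin θ * Real.sqrt (1 - 1 / (2 * (n : ℝ)))
      ≥ 4 * (n : ℝ) * Real.sqrt (1 - γ ^ 2)) :
    θ'' - θ' ≥ arccos γ := by
  have hN : (2:ℝ) ≤ (n:ℝ) := by exact_mod_cast hn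
  have hNpos : (0:ℝ) < (n:ℝ) := by linarith
  set N : ℝ := (n:ℝ) with hNdef
  set m : ℝ := 1 / N with hmdef
  have hm0 : 0 < m := by positivity
  have hm2 : m ≤ 1/2 := by
    rw [hmdef]
    rw [div_le_div_iff₀ hNpos (by norm_num)]
    linarith
  have hNm : N * m = 1 := by
    rw [hmdef, mul_one_div_cancel hNpos.ne']
  set a : ℝ := Real.sqrt (1 - 1/N) with hadef
  set b : ℝ := Real.sqrt (1 - 1/(2*N)) with hbdef
  have ha2 : a ^ 2 = 1 - m := by
    rw [hadef, sq_sqrt (by rw [← hmdef]; linarith)]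
  have hb2 : b ^ 2 = 1 - m/2 := by
    rw [hbdef, sq_sqrt]
    · rw [hmdef]; ring
    · have : 1/(2*N) ≤ 1/2 := by
        rw [div_le_div_iff₀ (by linarith) (by norm_num)]; linarith
      linarith
  have ha0 : 0 ≤ a := Real.sqrt_nonneg _
  have hb0 : 0 ≤ b := Real.sqrt_nonneg _
  have hbpos : 0 < b := by nlinarith [hb2]
  have ha1 : a ≤ 1 := by nlinarith [ha2]
  have hb1 : b ≤ 1 := by nlinarith [hb2]
  have hab : a ≤ b := by nlinarith [ha2, hb2]
  have hs0 : 0 < Real.sin θ := by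
    apply Real.sin_pos_of_pos_of_lt_pi hθ0
    have := Real.pi_pos
    linarith
  have hs1 : Real.sin θ ≤ 1 := Real.sin_le_one θ
  -- the key small quantity
  set X : ℝ := Real.sin θ * b * m / 4 with hXdef
  clear_value N m a b X
  have hX0 : 0 < X := by
    rw [hXdef]; exact div_pos (mul_pos (mul_pos hs0 hbpos) hm0) (by norm_num)
  have hXm : X ≤ m / 4 := by
    rw [hXdef]
    have h1 : Real.sin θ * b ≤ 1 := mul_le_one₀ hs1 hb0 hb1
    have h2 := mul_le_mul_of_nonneg_right h1 hm0.le
    linarith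
  have hX18 : X ≤ 1/8 := by linarith
  -- √(1-γ²) ≤ X
  have hsq : Real.sqrt (1 - γ ^ 2) ≤ X := by
    have h2 := mul_le_mul_of_nonneg_right hcond hm0.le
    have h3 : 4 * N * Real.sqrt (1 - γ ^ 2) * m = 4 * (N * m) * Real.sqrt (1 - γ ^ 2) := by
      ring
    rw [h3, hNm] at h2
    rw [hXdef]
    linarith
  -- ab ≤ 1 - 3m/4
  have habm : a * b ≤ 1 - 3*m/4 := by
    nlinarith [ha2, hb2, mul_nonneg ha0 hb0, sq_nonneg (a*b), sq_nonneg m, hm0, hm2]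
  -- key algebraic inequality
  have hkey2 : b * (a + b) * (1 + m^2/16) ≤ 2 := by
    nlinarith [habm, hb2, hm0, hm2, mul_nonneg ha0 hb0]
  have hkey : X * (1 + m^2/16) ≤ Real.sin θ * (b - a) := by
    have hba : (b - a) * (a + b) = m / 2 := by nlinarith [ha2, hb2]
    have habpos : 0 < a + b := by linarith
    rw [← mul_le_mul_iff_of_pos_right habpos]
    calc X * (1 + m^2/16) * (a + b)
        = (Real.sin θ * m / 4) * (b * (a + b) * (1 + m^2/16)) := by rw [hXdef]; ring
      _ ≤ (Real.sin θ * m / 4) * 2 := by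
          apply mul_le_mul_of_nonneg_left hkey2 (by positivity)
      _ = Real.sin θ * ((b - a) * (a + b)) := by rw [hba]; ring
      _ = Real.sin θ * (b - a) * (a + b) := by ring
  -- arcsin X ≤ X + X³
  have hpi : (3:ℝ) < π := Real.pi_gt_three
  have hX3 : X^3 ≤ (1/8:ℝ)^3 := pow_le_pow_left₀ hX0.le hX18 3
  have ht2 : X + X^3 ≤ π/2 := by norm_num at hX3 ⊢; linarith
  have ht0 : 0 < X + X^3 := by positivity
  have ht1 : X + X^3 ≤ 1 := by norm_num at hX3 ⊢; linarith
  have hsinX : X ≤ Real.sin (X + X^3) := by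
    have h := Real.sin_gt_sub_cube ht0
    have hu : X^2 ≤ 1/64 := by nlinarith [hX0, hX18]
    have h5 : (1 + X^2)^3 ≤ (65/64:ℝ)^3 :=
      pow_le_pow_left₀ (by positivity) (by linarith) 3
    have h4 : (1 + X^2)^3 ≤ 4 := by norm_num at h5 ⊢; linarith
    have hX3pos : 0 < X^3 := by positivity
    have hcube : (X + X^3)^3 ≤ 4 * X^3 := by
      have he : (X + X^3)^3 = X^3 * (1 + X^2)^3 := by ring
      rw [he]
      have := mul_le_mul_of_nonneg_left h4 hX3pos.le
      linarith
    linarith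
  have harcsinX : arcsin X ≤ X + X^3 := by
    calc arcsin X ≤ arcsin (Real.sin (X + X^3)) := Real.monotone_arcsin hsinX
      _ = X + X^3 := Real.arcsin_sin (by linarith) ht2
  -- arccos γ ≤ X + X³
  have harccos : arccos γ ≤ X * (1 + m^2/16) := by
    rw [Real.arccos_eq_arcsin hγ0]
    calc arcsin (Real.sqrt (1 - γ^2)) ≤ arcsin X := Real.monotone_arcsin hsq
      _ ≤ X + X^3 := harcsinX
      _ ≤ X * (1 + m^2/16) := by
          have hX2 : X^2 ≤ (m/4)^2 := pow_le_pow_left₀ hX0.le hXm 2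
          have h7 : X * X^2 ≤ X * (m/4)^2 := mul_le_mul_of_nonneg_left hX2 hX0.le
          have e1 : X^3 = X * X^2 := by ring
          have e2 : X * (1 + m^2/16) = X + X * (m/4)^2 := by ring
          linarith
  -- θ'' - θ' ≥ sinθ''- sinθ' = (b-a) sinθ
  have has1 : a * Real.sin θ ≤ 1 := mul_le_one₀ ha1 (le_of_lt hs0) hs1
  have hbs1 : b * Real.sin θ ≤ 1 := mul_le_one₀ hb1 (le_of_lt hs0) hs1
  have has0 : 0 ≤ a * Real.sin θ := by positivity
  have hbs0 : 0 ≤ b * Real.sin θ := by positivity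
  have hsin' : Real.sin θ' = a * Real.sin θ := by
    rw [hθ']; exact Real.sin_arcsin (by linarith) has1
  have hsin'' : Real.sin θ'' = b * Real.sin θ := by
    rw [hθ'']; exact Real.sin_arcsin (by linarith) hbs1
  have hle : θ' ≤ θ'' := by
    rw [hθ', hθ'']
    exact Real.monotone_arcsin (mul_le_mul_of_nonneg_right hab hs0.le)
  have hlip : Real.sin θ'' - Real.sin θ' ≤ θ'' - θ' := by
    rw [Real.sin_sub_sin]
    have h0 : (0:ℝ) ≤ (θ'' - θ') / 2 := by linarith
    have h1 : |Real.sin ((θ'' - θ') / 2)| ≤ (θ'' - θ') / 2 := by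
      have h := Real.abs_sin_le_abs (x := (θ'' - θ') / 2)
      rwa [abs_of_nonneg h0] at h
    have h2 : |Real.cos ((θ'' + θ') / 2)| ≤ 1 := Real.abs_cos_le_one _
    calc 2 * Real.sin ((θ'' - θ') / 2) * Real.cos ((θ'' + θ') / 2)
        ≤ 2 * |Real.sin ((θ'' - θ') / 2)| * |Real.cos ((θ'' + θ') / 2)| := by
          rw [mul_assoc, mul_assoc, ← abs_mul]
          exact mul_le_mul_of_nonneg_left (le_abs_self _) (by norm_num)
      _ ≤ 2 * ((θ'' - θ') / 2) * 1 := by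
          apply mul_le_mul (by linarith) h2 (abs_nonneg _) (by linarith)
      _ = θ'' - θ' := by ring
  have hfinal : Real.sin θ * (b - a) ≤ θ'' - θ' := by
    have : Real.sin θ'' - Real.sin θ' = Real.sin θ * (b - a) := by
      rw [hsin', hsin'']; ring
    linarith [hlip, this.symm.le]
  calc arccos γ ≤ X * (1 + m^2/16) := harccos
    _ ≤ Real.sin θ * (b - a) := hkey
    _ ≤ θ'' - θ' := hfinal
end

section
/- Let n ≥ 2 be a natural number and let c be a real number with 0 < c ≤ 2n. Then there exists a real number κ ≥ √(n−1) such that 2n · √(1 − ((κ² − (n−1))/(κ² + (n−1)))²) = c. -/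
/-- Existence of a parameter κ satisfying equation (1) of the paper. -/
theorem stmt_3 (n : ℕ) (hn : 2 ≤ n) (c : ℝ) (hc0 : 0 < c) (hc1 : c ≤ 2 * (n : ℝ)) :
    ∃ κ : ℝ, Real.sqrt ((n : ℝ) - 1) ≤ κ ∧
      2 * (n : ℝ) * Real.sqrt (1 - ((κ ^ 2 - ((n : ℝ) - 1)) / (κ ^ 2 + ((n : ℝ) - 1))) ^ 2)
        = c := by
  set m : ℝ := (n : ℝ) - 1 with hm
  have hn2 : (2 : ℝ) ≤ (n : ℝ) := by exact_mod_cast hn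
  have hmpos : 0 < m := by simp [hm]; linarith
  have h2n : (0 : ℝ) < 2 * (n : ℝ) := by linarith
  set s : ℝ := c / (2 * (n : ℝ)) with hs
  have hs0 : 0 < s := div_pos hc0 h2n
  have hs1 : s ≤ 1 := by
    rw [hs, div_le_one h2n]; exact hc1
  have hs2 : s ^ 2 ≤ 1 := by nlinarith
  set t : ℝ := Real.sqrt (1 - s ^ 2) with ht
  have ht0 : 0 ≤ t := Real.sqrt_nonneg _
  have ht2 : t ^ 2 = 1 - s ^ 2 := Real.sq_sqrt (by linarith)
  have ht1 : t < 1 := by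
    nlinarith [ht2, hs0, sq_nonneg s]
  have h1t : 0 < 1 - t := by linarith
  set A : ℝ := m * (1 + t) / (1 - t) with hA
  have hApos : 0 < A := by positivity
  have hAm : m ≤ A := by
    rw [hA, le_div_iff₀ h1t]; nlinarith
  refine ⟨Real.sqrt A, Real.sqrt_le_sqrt hAm, ?_⟩
  have hk2 : Real.sqrt A ^ 2 = A := Real.sq_sqrt hApos.le
  rw [hk2]
  have hden : A + m ≠ 0 := by positivity
  have hratio : (A - m) / (A + m) = t := by
    rw [div_eq_iff hden, hA]
    field_simp
    ring
  rw [hratio]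
  have : 1 - t ^ 2 = s ^ 2 := by linarith
  rw [this, Real.sqrt_sq hs0.le, hs]
  field_simp
end

section
/- Let n and l be natural numbers, let u, v ∈ ℝⁿ (with the Euclidean inner product), and let S ⊆ {1, …, n} with |S| ≤ l. Suppose vᵢ = −uᵢ for every i ∈ S and vᵢ = uᵢ for every i ∉ S. Let m > 0 and κ > 0, and assume |uᵢ| ≤ m for every i ∈ S and that there exists j ∉ S with |uⱼ| ≥ κ·m. Then ⟨u, v⟩ ≥ ((κ² − l)/(κ² + l))·‖u‖·‖v‖; equivalently, ∠(u, v) ≤ arccos((κ² − l)/(κ² + l)). -/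
open RealInnerProductSpace

/-- The central geometric estimate in Case 2.2 of the proof of Theorem 1:
the true gradient `u` and the hypothetical gradient `v` (obtained by flipping
the signs of at most `l` small coordinates) make an angle of at most
`arccos((κ² − l)/(κ² + l))`. -/
theorem stmt_8 (n l : ℕ) (u v : EuclideanSpace ℝ (Fin n)) (S : Finset (Fin n))
    (hScard : S.card ≤ l)
    (hflip : ∀ i ∈ S, v i = -u i) (hsame : ∀ i ∉ S, v i = u i)
    (m κ : ℝ) (hm : 0 < m) (hκ : 0 < κ)
    (hsmall : ∀ i ∈ S, |u i| ≤ m)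
    (hbig : ∃ j ∉ S, κ * m ≤ |u j|) :
    ((κ ^ 2 - (l : ℝ)) / (κ ^ 2 + (l : ℝ))) * (‖u‖ * ‖v‖) ≤ ⟪u, v⟫ ∧
      InnerProductGeometry.angle u v
        ≤ Real.arccos ((κ ^ 2 - (l : ℝ)) / (κ ^ 2 + (l : ℝ))) := by
  obtain ⟨j, hjS, hj⟩ := hbig
  set A : ℝ := ∑ i ∈ Sᶜ, u i ^ 2 with hA
  set B : ℝ := ∑ i ∈ S, u i ^ 2 with hB
  have hBnn : 0 ≤ B := Finset.sum_nonneg fun i _ => sq_nonneg _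
  have hAnn : 0 ≤ A := Finset.sum_nonneg fun i _ => sq_nonneg _
  have hinner : ⟪u, v⟫ = A - B := by
    rw [PiLp.inner_apply]
    rw [← Finset.sum_add_sum_compl S (fun i => (inner ℝ (u i) (v i) : ℝ))]
    have h1 : ∑ i ∈ S, (inner ℝ (u i) (v i) : ℝ) = -B := by
      rw [hB, ← Finset.sum_neg_distrib]
      exact Finset.sum_congr rfl fun i hi => by
        simp [RCLike.inner_apply, hflip i hi]; ring
    have h2 : ∑ i ∈ Sᶜ, (inner ℝ (u i) (v i) : ℝ) = A := by
      exact Finset.sum_congr rfl fun i hi => by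
        simp [RCLike.inner_apply, hsame i (Finset.mem_compl.mp hi)]
    rw [h1, h2]; ring
  have hnormu : ‖u‖ ^ 2 = A + B := by
    rw [← real_inner_self_eq_norm_sq, PiLp.inner_apply,
      ← Finset.sum_add_sum_compl S (fun i => (inner ℝ (u i) (u i) : ℝ))]
    have h1 : ∑ i ∈ S, (inner ℝ (u i) (u i) : ℝ) = B :=
      Finset.sum_congr rfl fun i hi => by simp [RCLike.inner_apply]
    have h2 : ∑ i ∈ Sᶜ, (inner ℝ (u i) (u i) : ℝ) = A :=
      Finset.sum_congr rfl fun i hi => by simp [RCLike.inner_apply]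
    rw [h1, h2]; ring
  have hnormv : ‖v‖ ^ 2 = A + B := by
    rw [← real_inner_self_eq_norm_sq, PiLp.inner_apply,
      ← Finset.sum_add_sum_compl S (fun i => (inner ℝ (v i) (v i) : ℝ))]
    have h1 : ∑ i ∈ S, (inner ℝ (v i) (v i) : ℝ) = B :=
      Finset.sum_congr rfl fun i hi => by
        simp [RCLike.inner_apply, hflip i hi]
    have h2 : ∑ i ∈ Sᶜ, (inner ℝ (v i) (v i) : ℝ) = A :=
      Finset.sum_congr rfl fun i hi => by
        simp [RCLike.inner_apply, hsame i (Finset.mem_compl.mp hi)]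
    rw [h1, h2]; ring
  have huv : ‖u‖ * ‖v‖ = A + B := by
    have : ‖u‖ = ‖v‖ := by
      have := hnormu.trans hnormv.symm
      nlinarith [norm_nonneg u, norm_nonneg v]
    rw [this, ← sq, hnormv]
  -- key estimates
  have hBle : B ≤ (l : ℝ) * m ^ 2 := by
    calc B ≤ ∑ _i ∈ S, m ^ 2 := Finset.sum_le_sum fun i hi => by
            have := hsmall i hi
            nlinarith [abs_nonneg (u i), sq_abs (u i)]
      _ = (S.card : ℝ) * m ^ 2 := by rw [Finset.sum_const]; push_cast; ring
      _ ≤ (l : ℝ) * m ^ 2 := by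
          apply mul_le_mul_of_nonneg_right _ (sq_nonneg m)
          exact_mod_cast hScard
  have hAge : κ ^ 2 * m ^ 2 ≤ A := by
    have hjm : κ ^ 2 * m ^ 2 ≤ u j ^ 2 := by
      have h2 := mul_le_mul hj hj (by positivity) (abs_nonneg (u j))
      nlinarith [sq_abs (u j)]
    calc κ ^ 2 * m ^ 2 ≤ u j ^ 2 := hjm
      _ ≤ A := Finset.single_le_sum (fun i _ => sq_nonneg (u i))
          (Finset.mem_compl.mpr hjS)
  have hkey : κ ^ 2 * B ≤ (l : ℝ) * A := by
    nlinarith [sq_nonneg κ, Nat.cast_nonneg (α := ℝ) l, hm, sq_nonneg m]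
  have hdenom : 0 < κ ^ 2 + (l : ℝ) := by positivity
  have hmain : ((κ ^ 2 - (l : ℝ)) / (κ ^ 2 + (l : ℝ))) * (‖u‖ * ‖v‖) ≤ ⟪u, v⟫ := by
    rw [huv, hinner, div_mul_eq_mul_div, div_le_iff₀ hdenom]
    nlinarith
  refine ⟨hmain, ?_⟩
  have hu0 : u ≠ 0 := by
    intro h
    have : u j = 0 := by rw [h]; rfl
    rw [this] at hj; simp at hj; nlinarith
  have hv0 : v ≠ 0 := by
    intro h
    have hv2 : ‖v‖ = 0 := by rw [h, norm_zero]
    have : ‖u‖ ^ 2 = 0 := by rw [hnormu, ← hnormv, hv2]; ring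
    exact hu0 (norm_eq_zero.mp (by nlinarith [norm_nonneg u]))
  rw [InnerProductGeometry.angle]
  have hle : (κ ^ 2 - (l : ℝ)) / (κ ^ 2 + (l : ℝ)) ≤ ⟪u, v⟫ / (‖u‖ * ‖v‖) := by
    rw [le_div_iff₀ (mul_pos (norm_pos_iff.mpr hu0) (norm_pos_iff.mpr hv0))]
    exact hmain
  simp only [Real.arccos]
  linarith [Real.monotone_arcsin hle]
end

section
/- Let E be a real inner product space, let n ≥ 2 be a natural number, let θ ∈ (0, π/2], and let γ ∈ [0, 1] satisfy sin θ · √(1 − 1/(2n)) ≥ 4n · √(1 − γ²). Let τ, x, y ∈ E be nonzero vectors such that ∠(x, τ) ≤ arcsin(√(1 − 1/n) · sin θ) and ∠(x, y) ≤ arccos γ. Then ∠(y, τ) ≤ arcsin(√(1 − 1/(2n)) · sin θ). -/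
open Real

section AngleTriangle

variable {V : Type*} [NormedAddCommGroup V] [InnerProductSpace ℝ V]

open InnerProductGeometry RealInnerProductSpace

private lemma unit_inner_ineq (u v w : V) (hu : ‖u‖ = 1) (hv : ‖v‖ = 1) (hw : ‖w‖ = 1) :
    ⟪u, v⟫ * ⟪v, w⟫ -
      Real.sqrt (1 - ⟪u, v⟫ ^ 2) * Real.sqrt (1 - ⟪v, w⟫ ^ 2) ≤ ⟪u, w⟫ := by
  set p := ⟪u, v⟫ with hp
  set q := ⟪v, w⟫ with hq
  have hvv : ⟪v, v⟫ = 1 := by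
    rw [real_inner_self_eq_norm_sq, hv]; norm_num
  have h1 : ⟪u - p • v, w - q • v⟫ = ⟪u, w⟫ - p * q := by
    rw [inner_sub_left, inner_sub_right, inner_sub_right, real_inner_smul_left,
      real_inner_smul_left, real_inner_smul_right, real_inner_smul_right, hvv]
    rw [← hp, ← hq]
    ring
  have h2 : ‖u - p • v‖ ^ 2 = 1 - p ^ 2 := by
    rw [norm_sub_sq_real, real_inner_smul_right, norm_smul, hu, hv, ← hp]
    simp [Real.norm_eq_abs, sq_abs]
    ring
  have h3 : ‖w - q • v‖ ^ 2 = 1 - q ^ 2 := by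
    rw [norm_sub_sq_real, real_inner_smul_right, norm_smul, hw, hv]
    rw [real_inner_comm v w, ← hq]
    simp [Real.norm_eq_abs, sq_abs]
    ring
  have h4 : ‖u - p • v‖ = Real.sqrt (1 - p ^ 2) := by
    rw [← h2, Real.sqrt_sq (norm_nonneg _)]
  have h5 : ‖w - q • v‖ = Real.sqrt (1 - q ^ 2) := by
    rw [← h3, Real.sqrt_sq (norm_nonneg _)]
  have h6 := abs_real_inner_le_norm (u - p • v) (w - q • v)
  rw [h1, h4, h5, abs_le] at h6
  linarith [h6.1]

private lemma angle_triangle_unit (u v w : V) (hu : ‖u‖ = 1) (hv : ‖v‖ = 1) (hw : ‖w‖ = 1) :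
    angle u w ≤ angle u v + angle v w := by
  by_cases hπ : π ≤ angle u v + angle v w
  · exact (angle_le_pi u w).trans hπ
  push_neg at hπ
  have hsum0 : 0 ≤ angle u v + angle v w :=
    add_nonneg (angle_nonneg _ _) (angle_nonneg _ _)
  have hcosuv : Real.cos (angle u v) = ⟪u, v⟫ := by
    rw [cos_angle, hu, hv]; norm_num
  have hcosvw : Real.cos (angle v w) = ⟪v, w⟫ := by
    rw [cos_angle, hv, hw]; norm_num
  have hcosuw : Real.cos (angle u w) = ⟪u, w⟫ := by
    rw [cos_angle, hu, hw]; norm_num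
  have hsinuv : Real.sin (angle u v) = Real.sqrt (1 - ⟪u, v⟫ ^ 2) := by
    have := sin_angle_mul_norm_mul_norm u v
    rw [hu, hv] at this
    have huu : ⟪u, u⟫ = 1 := by rw [real_inner_self_eq_norm_sq, hu]; norm_num
    have hvv : ⟪v, v⟫ = 1 := by rw [real_inner_self_eq_norm_sq, hv]; norm_num
    rw [huu, hvv] at this
    simpa [sq] using this
  have hsinvw : Real.sin (angle v w) = Real.sqrt (1 - ⟪v, w⟫ ^ 2) := by
    have := sin_angle_mul_norm_mul_norm v w
    rw [hv, hw] at this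
    have hvv : ⟪v, v⟫ = 1 := by rw [real_inner_self_eq_norm_sq, hv]; norm_num
    have hww : ⟪w, w⟫ = 1 := by rw [real_inner_self_eq_norm_sq, hw]; norm_num
    rw [hvv, hww] at this
    simpa [sq] using this
  have hkey : Real.cos (angle u v + angle v w) ≤ Real.cos (angle u w) := by
    rw [Real.cos_add, hcosuv, hcosvw, hcosuw, hsinuv, hsinvw]
    exact unit_inner_ineq u v w hu hv hw
  by_contra hlt
  push_neg at hlt
  have := Real.cos_lt_cos_of_nonneg_of_le_pi hsum0 (angle_le_pi u w) hlt
  linarith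

private lemma angle_triangle' (x y z : V) : angle x z ≤ angle x y + angle y z := by
  by_cases hx : x = 0
  · subst hx
    simp only [angle_zero_left]
    linarith [angle_nonneg y z]
  by_cases hy : y = 0
  · subst hy
    simp only [angle_zero_left, angle_zero_right]
    linarith [angle_le_pi x z]
  by_cases hz : z = 0
  · subst hz
    simp only [angle_zero_right]
    linarith [angle_nonneg x y]
  have hxn : (0 : ℝ) < ‖x‖⁻¹ := inv_pos.2 (norm_pos_iff.2 hx)
  have hyn : (0 : ℝ) < ‖y‖⁻¹ := inv_pos.2 (norm_pos_iff.2 hy)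
  have hzn : (0 : ℝ) < ‖z‖⁻¹ := inv_pos.2 (norm_pos_iff.2 hz)
  have nu : ‖(‖x‖⁻¹ • x : V)‖ = 1 := by
    rw [norm_smul, Real.norm_eq_abs, abs_of_pos hxn,
      inv_mul_cancel₀ (norm_ne_zero_iff.2 hx)]
  have nv : ‖(‖y‖⁻¹ • y : V)‖ = 1 := by
    rw [norm_smul, Real.norm_eq_abs, abs_of_pos hyn,
      inv_mul_cancel₀ (norm_ne_zero_iff.2 hy)]
  have nw : ‖(‖z‖⁻¹ • z : V)‖ = 1 := by
    rw [norm_smul, Real.norm_eq_abs, abs_of_pos hzn,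
      inv_mul_cancel₀ (norm_ne_zero_iff.2 hz)]
  have h := angle_triangle_unit (‖x‖⁻¹ • x) (‖y‖⁻¹ • y) (‖z‖⁻¹ • z) nu nv nw
  rwa [angle_smul_left_of_pos _ _ hxn, angle_smul_left_of_pos _ _ hxn,
    angle_smul_left_of_pos _ _ hyn, angle_smul_right_of_pos _ _ hyn,
    angle_smul_right_of_pos _ _ hzn, angle_smul_right_of_pos _ _ hzn] at h

end AngleTriangle

set_option maxHeartbeats 1000000 in
private lemma key_arcsin (m s C a b : ℝ) (hm2 : 2 ≤ m) (hs0 : 0 < s) (hs1 : s ≤ 1)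
    (hC0 : 0 ≤ C) (hC1 : C ≤ 1) (ha0 : 0 ≤ a) (ha1 : a ≤ 1) (hb0 : 0 ≤ b) (hb1 : b ≤ 1)
    (ha2' : m * a ^ 2 = m - 1) (hb2' : 2 * m * b ^ 2 = 2 * m - 1) (hab : a ≤ b)
    (hcond : 4 * m * C ≤ s * b) :
    arcsin C + arcsin (a * s) ≤ arcsin (b * s) := by
  have hm0 : (0 : ℝ) < m := by linarith
  -- 1 ≤ 4 m (b - a)
  have hdiff : 2 * m * (b ^ 2 - a ^ 2) = 1 := by linear_combination hb2' - 2 * ha2'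
  have hba : 1 ≤ 4 * m * (b - a) := by
    nlinarith [mul_nonneg (mul_nonneg hm0.le (sub_nonneg.2 hab))
      (show (0 : ℝ) ≤ 2 - (a + b) by linarith)]
  -- C ≤ s*b - s*a
  have hCkey : C ≤ s * b - s * a := by
    have h1 : s * 1 ≤ s * (4 * m * (b - a)) := mul_le_mul_of_nonneg_left hba hs0.le
    have h2 : 4 * m * C ≤ 4 * m * (s * (b - a)) := by nlinarith
    have h3 := le_of_mul_le_mul_left h2 (by linarith : (0 : ℝ) < 4 * m)
    nlinarith
  have hCsmall : 4 * m * C ≤ 1 := by nlinarith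
  have hC2m : m * C ^ 2 ≤ 1 := by
    have h16 : (4 * m * C) ^ 2 ≤ 1 := by
      nlinarith [mul_nonneg (mul_nonneg (by norm_num : (0 : ℝ) ≤ 4) hm0.le) hC0]
    nlinarith [mul_nonneg (show (0 : ℝ) ≤ 16 * m ^ 2 - m by nlinarith) (sq_nonneg C)]
  have hA0 : 0 ≤ a * s := mul_nonneg ha0 hs0.le
  have hA1 : a * s ≤ 1 := by nlinarith [mul_nonneg (sub_nonneg.2 ha1) hs0.le]
  have hB0 : 0 ≤ b * s := mul_nonneg hb0 hs0.le
  have hB1 : b * s ≤ 1 := by nlinarith [mul_nonneg (sub_nonneg.2 hb1) hs0.le]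
  have hA2 : (a * s) ^ 2 ≤ 1 := by nlinarith
  have hCA : C ≤ Real.sqrt (1 - (a * s) ^ 2) := by
    rw [Real.le_sqrt hC0 (show (0 : ℝ) ≤ 1 - (a * s) ^ 2 by linarith)]
    nlinarith [ha2', hC2m, sq_nonneg s,
      mul_nonneg (sq_nonneg a) (sub_nonneg.2 (show s ^ 2 ≤ 1 by nlinarith))]
  -- sum ≤ π/2
  have harcCA : arcsin C + arcsin (a * s) ≤ π / 2 := by
    have hh1 : arcsin C ≤ arcsin (Real.sqrt (1 - (a * s) ^ 2)) :=
      Real.monotone_arcsin hCA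
    have hh2 : arcsin (Real.sqrt (1 - (a * s) ^ 2)) = π / 2 - arcsin (a * s) := by
      rw [← Real.arccos_eq_arcsin hA0, Real.arccos]
    linarith
  have hsumnn : -(π / 2) ≤ arcsin C + arcsin (a * s) := by
    have hh1 : 0 ≤ arcsin C := Real.arcsin_nonneg.2 hC0
    have hh2 : 0 ≤ arcsin (a * s) := Real.arcsin_nonneg.2 hA0
    linarith [Real.pi_pos]
  rw [Real.le_arcsin_iff_sin_le ⟨hsumnn, harcCA⟩ ⟨by linarith, hB1⟩]
  rw [Real.sin_add, Real.sin_arcsin (by linarith) hC1,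
    Real.sin_arcsin (by linarith) hA1, Real.cos_arcsin, Real.cos_arcsin]
  have hs1' : Real.sqrt (1 - (a * s) ^ 2) ≤ 1 := Real.sqrt_le_one.2 (by nlinarith)
  have hs2' : Real.sqrt (1 - C ^ 2) ≤ 1 := Real.sqrt_le_one.2 (by nlinarith)
  have t1 : C * Real.sqrt (1 - (a * s) ^ 2) ≤ C := mul_le_of_le_one_right hC0 hs1'
  have t2 : Real.sqrt (1 - C ^ 2) * (a * s) ≤ a * s := mul_le_of_le_one_left hA0 hs2'
  nlinarith

set_option maxHeartbeats 1000000 in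
/-- Lemma 1 combined with the triangle inequality for angles: the relaxed
angle-update rule encloses the true gradient despite erroneous halfspace
cuts. -/
theorem stmt_9 {E : Type*} [NormedAddCommGroup E] [InnerProductSpace ℝ E]
    (n : ℕ) (hn : 2 ≤ n) (θ γ : ℝ)
    (hθ0 : 0 < θ) (hθ1 : θ ≤ π / 2) (hγ0 : 0 ≤ γ) (hγ1 : γ ≤ 1)
    (hcond : Real.sin θ * Real.sqrt (1 - 1 / (2 * (n : ℝ)))
      ≥ 4 * (n : ℝ) * Real.sqrt (1 - γ ^ 2))
    (τ x y : E) (hτ : τ ≠ 0) (hx : x ≠ 0) (hy : y ≠ 0)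
    (h1 : InnerProductGeometry.angle x τ
      ≤ arcsin (Real.sqrt (1 - 1 / (n : ℝ)) * Real.sin θ))
    (h2 : InnerProductGeometry.angle x y ≤ arccos γ) :
    InnerProductGeometry.angle y τ
      ≤ arcsin (Real.sqrt (1 - 1 / (2 * (n : ℝ))) * Real.sin θ) := by
  have hn2 : (2 : ℝ) ≤ (n : ℝ) := by exact_mod_cast hn
  set m : ℝ := (n : ℝ) with hm
  have hm0 : (0 : ℝ) < m := by linarith
  set s : ℝ := Real.sin θ with hs
  have hs0 : 0 < s := Real.sin_pos_of_pos_of_lt_pi hθ0 (by linarith [Real.pi_pos])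
  have hs1 : s ≤ 1 := Real.sin_le_one θ
  set a : ℝ := Real.sqrt (1 - 1 / m) with ha
  set b : ℝ := Real.sqrt (1 - 1 / (2 * m)) with hb
  set C : ℝ := Real.sqrt (1 - γ ^ 2) with hC
  have ha0 : 0 ≤ a := Real.sqrt_nonneg _
  have hb0 : 0 ≤ b := Real.sqrt_nonneg _
  have hC0 : 0 ≤ C := Real.sqrt_nonneg _
  have h1m : 1 / m ≤ 1 / 2 := by
    rw [div_le_div_iff₀ hm0 (by norm_num)]; linarith
  have h2m : 1 / (2 * m) ≤ 1 / 4 := by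
    rw [div_le_div_iff₀ (by linarith) (by norm_num)]; linarith
  have h1m0 : 0 < 1 / m := by apply div_pos <;> linarith
  have h2m0 : 0 < 1 / (2 * m) := by apply div_pos <;> linarith
  have ha2 : a ^ 2 = 1 - 1 / m := by
    rw [ha, Real.sq_sqrt]; linarith
  have hb2 : b ^ 2 = 1 - 1 / (2 * m) := by
    rw [hb, Real.sq_sqrt]; linarith
  have ha2' : m * a ^ 2 = m - 1 := by
    rw [ha2]; field_simp
  have hb2' : 2 * m * b ^ 2 = 2 * m - 1 := by
    rw [hb2]; field_simp
  have ha1 : a ≤ 1 := Real.sqrt_le_one.2 (by linarith)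
  have hb1 : b ≤ 1 := Real.sqrt_le_one.2 (by linarith)
  have hC1 : C ≤ 1 := Real.sqrt_le_one.2 (by nlinarith)
  have hab : a ≤ b := by
    apply Real.sqrt_le_sqrt
    have : 1 / (2 * m) ≤ 1 / m := by
      rw [div_le_div_iff₀ (by linarith) hm0]; nlinarith
    linarith
  have hmain : arcsin C + arcsin (a * s) ≤ arcsin (b * s) :=
    key_arcsin m s C a b hn2 hs0 hs1 hC0 hC1 ha0 ha1 hb0 hb1 ha2' hb2' hab hcond
  have htri : InnerProductGeometry.angle y τ
      ≤ InnerProductGeometry.angle y x + InnerProductGeometry.angle x τ :=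
    angle_triangle' y x τ
  have hcomm : InnerProductGeometry.angle y x = InnerProductGeometry.angle x y :=
    InnerProductGeometry.angle_comm y x
  have harccos : arccos γ = arcsin C := Real.arccos_eq_arcsin hγ0
  calc InnerProductGeometry.angle y τ
      ≤ InnerProductGeometry.angle y x + InnerProductGeometry.angle x τ := htri
    _ ≤ arccos γ + arcsin (a * s) := by rw [hcomm]; exact add_le_add h2 h1
    _ = arcsin C + arcsin (a * s) := by rw [harccos]
    _ ≤ arcsin (b * s) := hmain
end

section
/- Let E be a real inner product space and let g₁, g₂, T ∈ E be nonzero vectors. Let θ_c ∈ [0, π/2] and suppose ∠(g₁, g₂) ≤ θ_c. If ⟨g₂, T⟩ ≤ 0, then ⟨g₁, T⟩ ≤ ‖g₁‖·‖T‖·sin θ_c. -/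
open RealInnerProductSpace

/-- The geometric core of Case 1 of the paper's Corollary: when the two
gradients make an angle at most `θ_c`, an ascent direction for one that is a
descent direction for the other is nearly orthogonal to both. -/
theorem stmt_10 {E : Type*} [NormedAddCommGroup E] [InnerProductSpace ℝ E]
    (g₁ g₂ T : E) (hg₁ : g₁ ≠ 0) (hg₂ : g₂ ≠ 0) (hT : T ≠ 0)
    (θc : ℝ) (hθc0 : 0 ≤ θc) (hθc1 : θc ≤ Real.pi / 2)
    (hang : InnerProductGeometry.angle g₁ g₂ ≤ θc)
    (hdesc : ⟪g₂, T⟫ ≤ 0) :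
    ⟪g₁, T⟫ ≤ ‖g₁‖ * ‖T‖ * Real.sin θc := by
  have hn1 : (0:ℝ) < ‖g₁‖ := norm_pos_iff.mpr hg₁
  have hn2 : (0:ℝ) < ‖g₂‖ := norm_pos_iff.mpr hg₂
  have hcosθ : 0 ≤ Real.cos θc := Real.cos_nonneg_of_mem_Icc ⟨by linarith [Real.pi_pos], hθc1⟩
  have hsinθ : 0 ≤ Real.sin θc := Real.sin_nonneg_of_nonneg_of_le_pi hθc0 (by linarith [Real.pi_pos])
  -- cos θc ≤ cos (angle g₁ g₂)
  have hcosle : Real.cos θc ≤ Real.cos (InnerProductGeometry.angle g₁ g₂) :=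
    Real.cos_le_cos_of_nonneg_of_le_pi (InnerProductGeometry.angle_nonneg _ _)
      (by linarith [Real.pi_pos]) hang
  have hca : Real.cos (InnerProductGeometry.angle g₁ g₂) = ⟪g₁, g₂⟫ / (‖g₁‖ * ‖g₂‖) :=
    InnerProductGeometry.cos_angle g₁ g₂
  have hinner : ‖g₁‖ * ‖g₂‖ * Real.cos θc ≤ ⟪g₁, g₂⟫ := by
    have := mul_le_mul_of_nonneg_left hcosle (le_of_lt (mul_pos hn1 hn2))
    rw [hca] at this
    calc ‖g₁‖ * ‖g₂‖ * Real.cos θc = ‖g₁‖ * ‖g₂‖ * Real.cos θc := rfl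
      _ ≤ ‖g₁‖ * ‖g₂‖ * (⟪g₁, g₂⟫ / (‖g₁‖ * ‖g₂‖)) := this
      _ = ⟪g₁, g₂⟫ := by field_simp
  have hinner0 : 0 ≤ ⟪g₁, g₂⟫ := le_trans (by positivity) hinner
  set c : ℝ := ⟪g₁, g₂⟫ / ‖g₂‖ ^ 2 with hc
  have hc0 : 0 ≤ c := div_nonneg hinner0 (by positivity)
  set w : E := g₁ - c • g₂ with hw
  have hsplit : ⟪g₁, T⟫ = c * ⟪g₂, T⟫ + ⟪w, T⟫ := by
    rw [hw]
    rw [inner_sub_left, real_inner_smul_left]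
    ring
  have hwT : ⟪w, T⟫ ≤ ‖w‖ * ‖T‖ := real_inner_le_norm w T
  have hg2sq : ⟪g₂, g₂⟫ = ‖g₂‖ ^ 2 := real_inner_self_eq_norm_sq g₂
  have hwnorm : ‖w‖ ^ 2 = ‖g₁‖ ^ 2 - ⟪g₁, g₂⟫ ^ 2 / ‖g₂‖ ^ 2 := by
    have h2 : (‖g₂‖:ℝ) ^ 2 ≠ 0 := by positivity
    rw [hw, ← real_inner_self_eq_norm_sq]
    simp only [inner_sub_left, inner_sub_right, real_inner_smul_left, real_inner_smul_right]
    rw [hg2sq, real_inner_self_eq_norm_sq g₁, real_inner_comm g₂ g₁, hc]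
    field_simp
    rw [real_inner_comm g₂ g₁]
    ring
  -- ‖w‖² ≤ (‖g₁‖ sin θc)²
  have hsc : Real.sin θc ^ 2 = 1 - Real.cos θc ^ 2 := by
    have := Real.sin_sq_add_cos_sq θc; linarith
  have hwle : ‖w‖ ^ 2 ≤ (‖g₁‖ * Real.sin θc) ^ 2 := by
    rw [hwnorm]
    have h1 : (‖g₁‖ * ‖g₂‖ * Real.cos θc) ^ 2 ≤ ⟪g₁, g₂⟫ ^ 2 := by
      apply sq_le_sq' _ hinner
      have : 0 ≤ ‖g₁‖ * ‖g₂‖ * Real.cos θc := by positivity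
      linarith
    have h2 : (‖g₁‖ * ‖g₂‖ * Real.cos θc) ^ 2 / ‖g₂‖ ^ 2 ≤ ⟪g₁, g₂⟫ ^ 2 / ‖g₂‖ ^ 2 :=
      div_le_div_of_nonneg_right h1 (by positivity)
    have h3 : (‖g₁‖ * ‖g₂‖ * Real.cos θc) ^ 2 / ‖g₂‖ ^ 2 = ‖g₁‖ ^ 2 * Real.cos θc ^ 2 := by
      field_simp
    nlinarith
  have hwle' : ‖w‖ ≤ ‖g₁‖ * Real.sin θc := by
    nlinarith [norm_nonneg w, mul_nonneg hn1.le hsinθ]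
  calc ⟪g₁, T⟫ = c * ⟪g₂, T⟫ + ⟪w, T⟫ := hsplit
    _ ≤ ⟪w, T⟫ := by nlinarith
    _ ≤ ‖w‖ * ‖T‖ := hwT
    _ ≤ ‖g₁‖ * Real.sin θc * ‖T‖ := by
        apply mul_le_mul_of_nonneg_right hwle' (norm_nonneg T)
    _ = ‖g₁‖ * ‖T‖ * Real.sin θc := by ring
end

section
/- Let E be a real inner product space and let f_A, f_B : E → ℝ be differentiable functions whose gradients satisfy the first-order concavity inequality f(y) ≤ f(x) + ⟨∇f(x), y − x⟩ for all x, y ∈ E (for both f = f_A and f = f_B). Suppose f_A is L-Lipschitz for some L ≥ 0. Let S_A, S_B ∈ E with ∇f_A(S_A) ≠ 0 and ∇f_B(S_B) ≠ 0, let θ_c ∈ [0, π/2] with ∠(∇f_A(S_A), ∇f_B(S_B)) ≤ θ_c, and let δ ≥ 0. Then for every T ∈ E with ‖T‖ ≤ δ, either f_A(S_A + T) − f_A(S_A) ≤ δ·L·sin θ_c or f_B(S_B − T) − f_B(S_B) ≤ δ·L·sin θ_c. -/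
open RealInnerProductSpace

/-- Case 1 of the paper's Corollary: closely aligned gradients imply ε-weak
Pareto optimality with ε = δ·L·sin θ_c. -/
theorem stmt_11 {E : Type*} [NormedAddCommGroup E] [InnerProductSpace ℝ E]
    [CompleteSpace E]
    (fA fB : E → ℝ) (hdA : Differentiable ℝ fA) (hdB : Differentiable ℝ fB)
    (hconcA : ∀ x y : E, fA y ≤ fA x + ⟪gradient fA x, y - x⟫)
    (hconcB : ∀ x y : E, fB y ≤ fB x + ⟪gradient fB x, y - x⟫)
    (L : ℝ) (hL : 0 ≤ L)
    (hLip : ∀ x y : E, |fA y - fA x| ≤ L * ‖x - y‖)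
    (SA SB : E) (hgA : gradient fA SA ≠ 0) (hgB : gradient fB SB ≠ 0)
    (θc : ℝ) (hθc0 : 0 ≤ θc) (hθc1 : θc ≤ Real.pi / 2)
    (hang : InnerProductGeometry.angle (gradient fA SA) (gradient fB SB) ≤ θc)
    (δ : ℝ) (hδ : 0 ≤ δ) :
    ∀ T : E, ‖T‖ ≤ δ →
      fA (SA + T) - fA SA ≤ δ * L * Real.sin θc ∨
      fB (SB - T) - fB SB ≤ δ * L * Real.sin θc := by
  intro T hT
  set gA := gradient fA SA with hgAdef
  set gB := gradient fB SB with hgBdef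
  have hsinθc : 0 ≤ Real.sin θc := Real.sin_nonneg_of_nonneg_of_le_pi hθc0
    (hθc1.trans (by linarith [Real.pi_pos]))
  by_cases h : ⟪gB, T⟫ ≤ 0
  · -- bound fA's gain
    left
    -- norm of gradient ≤ L
    have hnorms : ‖gA‖ ≤ L := by
      have h1 := hconcA SA (SA - gA)
      have h2 := hLip SA (SA - gA)
      have h3 : ⟪gA, SA - gA - SA⟫ = -‖gA‖ ^ 2 := by
        simp [real_inner_self_eq_norm_sq]
      rw [h3] at h1
      have h4 : ‖SA - (SA - gA)‖ = ‖gA‖ := by simp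
      rw [h4] at h2
      have h5 : ‖gA‖ ^ 2 ≤ L * ‖gA‖ := by
        have := abs_le.mp h2
        linarith [this.1]
      have hpos : 0 < ‖gA‖ := norm_pos_iff.mpr hgA
      nlinarith
    set θ := InnerProductGeometry.angle gA gB with hθdef
    have hθ0 : 0 ≤ θ := InnerProductGeometry.angle_nonneg _ _
    have hθle : θ ≤ Real.pi / 2 := hang.trans hθc1
    have hcosθ : 0 ≤ Real.cos θ := Real.cos_nonneg_of_mem_Icc
      ⟨by linarith [Real.pi_pos], hθle⟩
    have hsinθ : 0 ≤ Real.sin θ := Real.sin_nonneg_of_nonneg_of_le_pi hθ0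
      (hθle.trans (by linarith [Real.pi_pos]))
    have hsinle : Real.sin θ ≤ Real.sin θc := by
      apply Real.sin_le_sin_of_le_of_le_pi_div_two (by linarith [Real.pi_pos]) hθc1 hang
    have hnA : 0 < ‖gA‖ := norm_pos_iff.mpr hgA
    have hnB : 0 < ‖gB‖ := norm_pos_iff.mpr hgB
    -- inner gA gB ≥ 0
    have hinnerAB : 0 ≤ ⟪gA, gB⟫ := by
      rw [← InnerProductGeometry.cos_angle_mul_norm_mul_norm]
      positivity
    set c : ℝ := ⟪gA, gB⟫ / ‖gB‖ ^ 2 with hc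
    have hc0 : 0 ≤ c := div_nonneg hinnerAB (by positivity)
    -- norm of orthogonal component = ‖gA‖ * sin θ
    have hperp : ‖gA - c • gB‖ = ‖gA‖ * Real.sin θ := by
      have hsq : ‖gA - c • gB‖ ^ 2 = (‖gA‖ * Real.sin θ) ^ 2 := by
        have hexp : ‖gA - c • gB‖ ^ 2 = ‖gA‖ ^ 2 - ⟪gA, gB⟫ ^ 2 / ‖gB‖ ^ 2 := by
          rw [← real_inner_self_eq_norm_sq, inner_sub_sub_self]
          simp only [real_inner_smul_left, real_inner_smul_right,
            real_inner_self_eq_norm_sq, real_inner_comm gB gA, hc, norm_smul,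
            mul_pow, sq_abs, Real.norm_eq_abs]
          field_simp
          ring
        have hcos : Real.cos θ * (‖gA‖ * ‖gB‖) = ⟪gA, gB⟫ :=
          InnerProductGeometry.cos_angle_mul_norm_mul_norm gA gB
        have hsin2 : (‖gA‖ * Real.sin θ) ^ 2 = ‖gA‖ ^ 2 * (1 - Real.cos θ ^ 2) := by
          rw [mul_pow, Real.sin_sq]
        rw [hexp, ← hcos, hsin2]
        field_simp
      have h1 : 0 ≤ ‖gA - c • gB‖ := norm_nonneg _
      have h2 : 0 ≤ ‖gA‖ * Real.sin θ := by positivity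
      nlinarith
    -- main bound
    have hbound : ⟪gA, T⟫ ≤ δ * L * Real.sin θc := by
      have hsplit : ⟪gA, T⟫ = ⟪gA - c • gB, T⟫ + c * ⟪gB, T⟫ := by
        rw [inner_sub_left, real_inner_smul_left]; ring
      have h1 : ⟪gA - c • gB, T⟫ ≤ ‖gA - c • gB‖ * ‖T‖ := real_inner_le_norm _ _
      have h2 : c * ⟪gB, T⟫ ≤ 0 := mul_nonpos_of_nonneg_of_nonpos hc0 h
      have h3 : ‖gA - c • gB‖ * ‖T‖ ≤ (L * Real.sin θc) * δ := by
        rw [hperp]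
        have : ‖gA‖ * Real.sin θ ≤ L * Real.sin θc := by
          nlinarith
        exact mul_le_mul this hT (norm_nonneg _) (by positivity)
      linarith
    have := hconcA SA (SA + T)
    simp only [add_sub_cancel_left] at this
    linarith
  · right
    have := hconcB SB (SB - T)
    have heq : ⟪gB, SB - T - SB⟫ = -⟪gB, T⟫ := by
      rw [show SB - T - SB = -T by abel, inner_neg_right]
    rw [heq] at this
    push_neg at h
    have : fB (SB - T) - fB SB ≤ 0 := by linarith
    have hnn : 0 ≤ δ * L * Real.sin θc := by positivity
    linarith
end

section
/- Let n ≥ 1 and let f : ℝⁿ → ℝ (with the Euclidean inner product), S ∈ ℝⁿ, β ≥ 0, and g ∈ ℝⁿ satisfy |f(y) − f(S) − ⟨g, y − S⟩| ≤ (β/2)·‖y − S‖² for all y ∈ ℝⁿ. Let (v₁, …, vₙ) be an orthonormal basis of ℝⁿ and let d, κ ≥ 0 with |⟨g, vᵢ⟩| ≤ κ·β·d for every i. Then for every T ∈ ℝⁿ, f(S + T) − f(S) ≤ d·κ·√n·β·‖T‖ + (β/2)·‖T‖². If moreover f(y) ≤ f(S) + ⟨g, y − S⟩ for all y ∈ ℝⁿ,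 then f(S + T) − f(S) ≤ d·κ·√n·β·‖T‖. -/
open RealInnerProductSpace

/-- Conclusion 2 of Theorem 1 of the paper: near-optimality of the responding
agent bounds the benefit of any trade. -/
theorem stmt_12 (n : ℕ) (hn : 1 ≤ n)
    (f : EuclideanSpace ℝ (Fin n) → ℝ) (S : EuclideanSpace ℝ (Fin n))
    (β : ℝ) (hβ : 0 ≤ β) (g : EuclideanSpace ℝ (Fin n))
    (hsmooth : ∀ y, |f y - f S - ⟪g, y - S⟫| ≤ β / 2 * ‖y - S‖ ^ 2)
    (v : OrthonormalBasis (Fin n) ℝ (EuclideanSpace ℝ (Fin n)))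
    (d κ : ℝ) (hd : 0 ≤ d) (hκ : 0 ≤ κ)
    (hgb : ∀ i : Fin n, |⟪g, v i⟫| ≤ κ * β * d) :
    (∀ T : EuclideanSpace ℝ (Fin n),
        f (S + T) - f S ≤ d * κ * Real.sqrt n * β * ‖T‖ + β / 2 * ‖T‖ ^ 2) ∧
      ((∀ y, f y ≤ f S + ⟪g, y - S⟫) →
        ∀ T : EuclideanSpace ℝ (Fin n),
          f (S + T) - f S ≤ d * κ * Real.sqrt n * β * ‖T‖) := by
  have hgnorm : ‖g‖ ≤ Real.sqrt n * (κ * β * d) := by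
    have hsum : ∑ i, ⟪g, v i⟫ * ⟪v i, g⟫ = ⟪g, g⟫ := v.sum_inner_mul_inner g g
    have h1 : ‖g‖ ^ 2 ≤ n * (κ * β * d) ^ 2 := by
      have : ‖g‖ ^ 2 = ∑ i, ⟪g, v i⟫ ^ 2 := by
        rw [← real_inner_self_eq_norm_sq, ← hsum]
        congr 1; ext i; rw [real_inner_comm g (v i)]; ring
      rw [this]
      calc ∑ i, ⟪g, v i⟫ ^ 2 ≤ ∑ _i : Fin n, (κ * β * d) ^ 2 := by
            apply Finset.sum_le_sum
            intro i _
            have := hgb i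
            nlinarith [abs_nonneg ⟪g, v i⟫, sq_abs ⟪g, v i⟫]
        _ = n * (κ * β * d) ^ 2 := by simp [Finset.sum_const, mul_comm]
    have hnn : (0:ℝ) ≤ κ * β * d := by positivity
    have h2 := Real.sqrt_le_sqrt h1
    rwa [Real.sqrt_sq (norm_nonneg g), Real.sqrt_mul (Nat.cast_nonneg n),
      Real.sqrt_sq hnn] at h2
  have key : ∀ T : EuclideanSpace ℝ (Fin n), ⟪g, T⟫ ≤ d * κ * Real.sqrt n * β * ‖T‖ := by
    intro T
    calc ⟪g, T⟫ ≤ ‖g‖ * ‖T‖ := real_inner_le_norm g T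
      _ ≤ (Real.sqrt n * (κ * β * d)) * ‖T‖ := by
          exact mul_le_mul_of_nonneg_right hgnorm (norm_nonneg T)
      _ = d * κ * Real.sqrt n * β * ‖T‖ := by ring
  constructor
  · intro T
    have h := hsmooth (S + T)
    rw [add_sub_cancel_left] at h
    have h2 := (abs_le.mp h).2
    linarith [key T]
  · intro hconc T
    have h := hconc (S + T)
    rw [add_sub_cancel_left] at h
    linarith [key T]
end
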